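/- For integers n ≥ a ≥ 3, the maximum number of edges ex(n,a) in a graph on n vertices with no clique of size a satisfies ex(n,a) ≤ ⌊(n/(n+2)) · ex(n+1,a)⌋. -/

import Mathlib

/-- The Turán number: maximum number of edges of a simple graph on `n` vertices
containing no clique of size `a`. -/
noncomputable def turanEx (n a : ℕ) : ℕ :=
  sSup {m | ∃ G : SimpleGraph (Fin n), G.CliqueFree a ∧ G.edgeSet.ncard = m}

open Finset SimpleGraph

lemma turan_bdd (n a : ℕ) :
    BddAbove {m | ∃ G : SimpleGraph (Fin n), G.CliqueFree a ∧ G.edgeSet.ncard = m} := by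
  classical
  refine ⟨Fintype.card (Sym2 (Fin n)), ?_⟩
  rintro m ⟨G, -, rfl⟩
  rw [Set.ncard_eq_toFinset_card']
  simpa using Finset.card_le_univ G.edgeSet.toFinset

lemma turan_nonempty (n a : ℕ) (ha : 3 ≤ a) :
    {m | ∃ G : SimpleGraph (Fin n), G.CliqueFree a ∧ G.edgeSet.ncard = m}.Nonempty := by
  exact ⟨0, ⊥, SimpleGraph.cliqueFree_bot (by omega), by rw [SimpleGraph.edgeSet_bot]; exact Set.ncard_empty _⟩

lemma turan_key (n a : ℕ) (ha : 3 ≤ a) (han : a ≤ n) (G : SimpleGraph (Fin n))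
    (hG : G.CliqueFree a) :
    (n + 2) * G.edgeSet.ncard ≤ n * turanEx (n + 1) a := by
  classical
  have hn : 0 < n := by omega
  haveI : Nonempty (Fin n) := ⟨⟨0, hn⟩⟩
  set m := G.edgeFinset.card with hm
  have hmncard : G.edgeSet.ncard = m := by
    rw [Set.ncard_eq_toFinset_card']
    rfl
  -- max degree vertex
  obtain ⟨v, -, hv⟩ := Finset.exists_max_image (univ : Finset (Fin n)) (fun u => G.degree u)
    Finset.univ_nonempty
  have hdegsum : ∑ u, G.degree u = 2 * m := G.sum_degrees_eq_twice_card_edges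
  have hmaxdeg : 2 * m ≤ n * G.degree v := by
    calc 2 * m = ∑ u, G.degree u := hdegsum.symm
    _ ≤ ∑ _u : Fin n, G.degree v := Finset.sum_le_sum (fun u _ => hv u (mem_univ u))
    _ = n * G.degree v := by simp [mul_comm]
  -- clone v
  set f : Fin (n + 1) → Fin n := Fin.lastCases v (fun i => i) with hf
  have hfc : ∀ i : Fin n, f i.castSucc = i := fun i => Fin.lastCases_castSucc ..
  have hfl : f (Fin.last n) = v := Fin.lastCases_last ..
  set G' : SimpleGraph (Fin (n + 1)) := G.comap f with hG'
  have hadj : ∀ x y, G'.Adj x y ↔ G.Adj (f x) (f y) := fun x y => Iff.rfl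
  -- clique-free
  have hcf : G'.CliqueFree a := by
    intro t ht
    apply hG (t.image f)
    have hinj : Set.InjOn f t := by
      intro x hx y hy hxy
      by_contra hne
      exact G.ne_of_adj (ht.1 hx hy hne) hxy
    constructor
    · intro p hp q hq hne
      simp only [Finset.coe_image, Set.mem_image, Finset.mem_coe] at hp hq
      obtain ⟨x, hx, rfl⟩ := hp
      obtain ⟨y, hy, rfl⟩ := hq
      have hxy : x ≠ y := fun h => hne (by rw [h])
      exact ht.1 hx hy hxy
    · rw [Finset.card_image_of_injOn hinj, ht.2]
  -- edge count of G'
  have hdeg' : ∀ x : Fin (n + 1),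
      G'.degree x = ∑ y : Fin (n + 1), if G.Adj (f x) (f y) then 1 else 0 := by
    intro x
    rw [← SimpleGraph.card_neighborFinset_eq_degree, neighborFinset_eq_filter,
      Finset.card_filter]
    exact Finset.sum_congr rfl fun y _ => by simp [hG', SimpleGraph.comap_adj]
  have hdegv : ∀ w : Fin n, (∑ j : Fin n, if G.Adj w j then 1 else 0) = G.degree w := by
    intro w
    rw [← SimpleGraph.card_neighborFinset_eq_degree, neighborFinset_eq_filter,
      Finset.card_filter]
  have hdegv' : (∑ i : Fin n, if G.Adj i v then 1 else 0) = G.degree v := by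
    rw [← hdegv v]
    exact Finset.sum_congr rfl (fun i _ => by simp [SimpleGraph.adj_comm])
  have hE' : 2 * G'.edgeFinset.card = 2 * m + 2 * G.degree v := by
    rw [← G'.sum_degrees_eq_twice_card_edges]
    calc ∑ x, G'.degree x
        = ∑ x : Fin (n+1), ∑ y : Fin (n+1), if G.Adj (f x) (f y) then 1 else 0 :=
          Finset.sum_congr rfl (fun x _ => hdeg' x)
      _ = ∑ x : Fin (n+1), ((∑ j : Fin n, if G.Adj (f x) j then 1 else 0)
            + if G.Adj (f x) v then 1 else 0) := by
          refine Finset.sum_congr rfl (fun x _ => ?_)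
          rw [Fin.sum_univ_castSucc]
          simp [hfc, hfl]
      _ = ((∑ i : Fin n, ((∑ j : Fin n, if G.Adj i j then 1 else 0)
            + if G.Adj i v then 1 else 0))
            + ((∑ j : Fin n, if G.Adj v j then 1 else 0) + if G.Adj v v then 1 else 0)) := by
          rw [Fin.sum_univ_castSucc]
          simp only [hfc, hfl]
      _ = 2 * m + 2 * G.degree v := by
          rw [Finset.sum_add_distrib, hdegv']
          simp only [hdegv, G.irrefl, if_false, add_zero, hdegsum]
          ring
  have hE : G'.edgeFinset.card = m + G.degree v := by omega
  -- membership
  have hmem : m + G.degree v ∈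
      {k | ∃ H : SimpleGraph (Fin (n + 1)), H.CliqueFree a ∧ H.edgeSet.ncard = k} := by
    exact ⟨G', hcf, by rw [Set.ncard_eq_toFinset_card']; exact hE⟩
  have hle : m + G.degree v ≤ turanEx (n + 1) a := le_csSup (turan_bdd (n + 1) a) hmem
  rw [hmncard]
  have := hle
  nlinarith [hle, hmaxdeg, Nat.zero_le (G.degree v)]

theorem turan_ex_le_floor_next (n a : ℕ) (ha : 3 ≤ a) (han : a ≤ n) :
    (turanEx n a : ℤ) ≤ ⌊((n : ℚ) * (turanEx (n + 1) a : ℚ)) / ((n : ℚ) + 2)⌋ := by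
  have hmem := Nat.sSup_mem (turan_nonempty n a ha) (turan_bdd n a)
  obtain ⟨G, hGcf, hGcard⟩ := hmem
  have hkey : (n + 2) * turanEx n a ≤ n * turanEx (n + 1) a := by
    have h2 : turanEx n a = G.edgeSet.ncard := hGcard.symm
    rw [h2]; exact turan_key n a ha han G hGcf
  rw [Int.le_floor]
  have hpos : (0 : ℚ) < (n : ℚ) + 2 := by positivity
  rw [le_div_iff₀ hpos]
  push_cast
  have : ((n + 2) * turanEx n a : ℚ) ≤ (n * turanEx (n + 1) a : ℚ) := by
    exact_mod_cast hkey
  push_cast at this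
  linarith
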